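/- Under the setup of the alternating minimization for F(X1, C, B, D) = ‖(A1 − X1) ⊙ W1‖_F² + ‖A2 − X1C − BD‖_F² (sequences (X1)_p, C_p, B_p, D_p satisfying the first-order stationarity equations, m_p = F((X1)_p, C_p, B_p, D_p)), assume Σ_{p=1}^∞ √(m_p − m_{p+1}) < ∞. If there exists δ > 0 such that D_pD_pᵀ ≥ δ·I_{r−k} (in the positive semidefinite order) for all sufficiently large p, then lim_{p→∞} B_p exists. -/

import Mathlib

open Matrix Filter Topology

noncomputable def frob {α β : Type*} [Fintype α] [Fintype β] (M : Matrix α β ℝ) : ℝ :=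
  Real.sqrt (∑ i, ∑ j, (M i j) ^ 2)

noncomputable def projCol {m k : ℕ} (B : Matrix (Fin m) (Fin k) ℝ) :
    Matrix (Fin m) (Fin m) ℝ :=
  B * (Bᵀ * B)⁻¹ * Bᵀ

section Aux

variable {α β γ : Type*} [Fintype α] [Fintype β] [Fintype γ]

/-- The Frobenius inner product. -/
noncomputable def ip (U V : Matrix α β ℝ) : ℝ := ∑ i, ∑ j, U i j * V i j

lemma ip_nonneg (M : Matrix α β ℝ) : 0 ≤ ip M M :=
  Finset.sum_nonneg fun i _ => Finset.sum_nonneg fun j _ => mul_self_nonneg _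

lemma frob_sq (M : Matrix α β ℝ) : frob M ^ 2 = ip M M := by
  rw [frob, Real.sq_sqrt (by positivity)]
  simp [ip, sq]

lemma ip_expand (U V : Matrix α β ℝ) :
    ip (U + V) (U + V) = ip U U + 2 * ip U V + ip V V := by
  have h : ∀ i j, (U + V) i j * (U + V) i j
      = U i j * U i j + 2 * (U i j * V i j) + V i j * V i j := by
    intro i j; simp only [Matrix.add_apply]; ring
  simp only [ip, h, Finset.sum_add_distrib, Finset.mul_sum]

lemma pyth (U V : Matrix α β ℝ) (h : ip U V = 0) :
    ip (U + V) (U + V) = ip U U + ip V V := by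
  rw [ip_expand, h]; ring

lemma ip_eq_trace (U V : Matrix α β ℝ) : ip U V = (U * Vᵀ).trace := by
  simp [ip, Matrix.trace, Matrix.mul_apply, Matrix.diag]

lemma ip_zero_left (V : Matrix α β ℝ) : ip (0 : Matrix α β ℝ) V = 0 := by
  simp [ip]

lemma ip_neg_left (U V : Matrix α β ℝ) : ip (-U) V = -ip U V := by
  unfold ip
  simp only [Matrix.neg_apply, neg_mul, Finset.sum_neg_distrib]

lemma ip_mul_right (U : Matrix α β ℝ) (E : Matrix α γ ℝ) (Cm : Matrix γ β ℝ) :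
    ip U (E * Cm) = ip (U * Cmᵀ) E := by
  rw [ip_eq_trace, ip_eq_trace, Matrix.transpose_mul, ← Matrix.mul_assoc]

lemma ip_mul_left (U : Matrix α β ℝ) (X : Matrix α γ ℝ) (V : Matrix γ β ℝ) :
    ip U (X * V) = ((Xᵀ * U) * Vᵀ).trace := by
  rw [ip_eq_trace, Matrix.transpose_mul, ← Matrix.mul_assoc, Matrix.trace_mul_comm,
    ← Matrix.mul_assoc]

lemma ip_had (P E W : Matrix α β ℝ) :
    ip (Matrix.hadamard P W) (Matrix.hadamard E W)
      = ip (Matrix.hadamard (Matrix.hadamard P W) W) E := by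
  refine Finset.sum_congr rfl fun i _ => Finset.sum_congr rfl fun j _ => ?_
  simp only [Matrix.hadamard_apply]; ring

lemma hadamard_neg_left (P W : Matrix α β ℝ) :
    Matrix.hadamard (-P) W = -(Matrix.hadamard P W) := by
  ext i j; simp [Matrix.hadamard_apply]

lemma trace_mul_psd_nonneg {M : Matrix β β ℝ} (hM : M.PosSemidef) (E : Matrix α β ℝ) :
    0 ≤ (E * M * Eᵀ).trace := by
  rw [Matrix.trace]
  refine Finset.sum_nonneg fun i _ => ?_
  have h := hM.dotProduct_mulVec_nonneg (E i)
  simp only [star_trivial] at h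
  convert h using 1
  simp only [Matrix.diag_apply, Matrix.mul_apply, Matrix.transpose_apply, Matrix.mulVec,
    dotProduct, Finset.sum_mul, Finset.mul_sum]
  rw [Finset.sum_comm]
  refine Finset.sum_congr rfl fun a _ => Finset.sum_congr rfl fun b _ => by ring

lemma single_sq_le_ip (E : Matrix α β ℝ) (i : α) (j : β) :
    (E i j) ^ 2 ≤ ip E E := by
  have h1 : (E i j) ^ 2 ≤ ∑ j', E i j' * E i j' := by
    rw [sq]
    exact Finset.single_le_sum (f := fun j' => E i j' * E i j')
      (fun j' _ => mul_self_nonneg _) (Finset.mem_univ j)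
  refine h1.trans ?_
  exact Finset.single_le_sum (f := fun i' => ∑ j', E i' j' * E i' j')
    (fun i' _ => Finset.sum_nonneg fun j' _ => mul_self_nonneg _) (Finset.mem_univ i)

end Aux

/-- **Theorem 4.4 (ii).** If `Σ √(m_p − m_{p+1}) < ∞` and `D_pD_pᵀ ≥ δ·I` (in the positive
semidefinite order) for all large `p` and some `δ > 0`, then `lim B_p` exists. -/
theorem stmt_18
    {m k l s : ℕ}
    (A1 : Matrix (Fin m) (Fin k) ℝ) (A2 : Matrix (Fin m) (Fin l) ℝ)
    (W1 : Matrix (Fin m) (Fin k) ℝ) (hW1 : ∀ i j, 0 < W1 i j)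
    (X1 : ℕ → Matrix (Fin m) (Fin k) ℝ) (C : ℕ → Matrix (Fin k) (Fin l) ℝ)
    (B : ℕ → Matrix (Fin m) (Fin s) ℝ) (D : ℕ → Matrix (Fin s) (Fin l) ℝ)
    (mseq : ℕ → ℝ)
    (hm : ∀ p, mseq p = frob (Matrix.hadamard (A1 - X1 p) W1) ^ 2 +
      frob (A2 - X1 p * C p - B p * D p) ^ 2)
    (heq1 : ∀ p, Matrix.hadamard (Matrix.hadamard (X1 (p + 1) - A1) W1) W1 =
      (A2 - X1 (p + 1) * C p - B p * D p) * (C p)ᵀ)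
    (heq2 : ∀ p, (X1 (p + 1))ᵀ * (A2 - X1 (p + 1) * C (p + 1) - B p * D p) = 0)
    (heq3 : ∀ p, (A2 - X1 (p + 1) * C (p + 1) - B (p + 1) * D p) * (D p)ᵀ = 0)
    (heq4 : ∀ p, (B (p + 1))ᵀ * (A2 - X1 (p + 1) * C (p + 1) - B (p + 1) * D (p + 1)) = 0)
    (hsum : Summable (fun p => Real.sqrt (mseq p - mseq (p + 1))))
    (δ : ℝ) (hδ : 0 < δ) (N : ℕ)
    (hD : ∀ p, N ≤ p → (D p * (D p)ᵀ - δ • (1 : Matrix (Fin s) (Fin s) ℝ)).PosSemidef)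
    :
    ∃ Bs : Matrix (Fin m) (Fin s) ℝ, Tendsto B atTop (nhds Bs) := by
  -- Step 1: the decrease `mseq p - mseq (p+1)` dominates `‖(B (p+1) - B p) * D p‖²`.
  have key : ∀ p, ip ((B (p + 1) - B p) * D p) ((B (p + 1) - B p) * D p) ≤ mseq p - mseq (p + 1)
      ∧ 0 ≤ mseq p - mseq (p + 1) := by
    intro p
    set X0 := X1 p with hX0
    set X1' := X1 (p + 1) with hX1'
    set C0 := C p with hC0
    set C1 := C (p + 1) with hC1
    set B0 := B p with hB0
    set B1 := B (p + 1) with hB1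
    set D0 := D p with hD0
    set D1 := D (p + 1) with hD1
    -- X-step
    have e1 : Matrix.hadamard (A1 - X0) W1
        = Matrix.hadamard (A1 - X1') W1 + Matrix.hadamard (X1' - X0) W1 := by
      ext i j; simp [Matrix.hadamard_apply, Matrix.sub_apply, Matrix.add_apply]; ring
    have e2 : A2 - X0 * C0 - B0 * D0
        = (A2 - X1' * C0 - B0 * D0) + (X1' - X0) * C0 := by
      rw [Matrix.sub_mul]; abel
    set U1 := Matrix.hadamard (A1 - X1') W1 with hU1
    set V1 := Matrix.hadamard (X1' - X0) W1 with hV1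
    set U2 := A2 - X1' * C0 - B0 * D0 with hU2
    set V2 := (X1' - X0) * C0 with hV2
    have cross : ip U1 V1 + ip U2 V2 = 0 := by
      have h1 : ip U1 V1 = ip (Matrix.hadamard U1 W1) (X1' - X0) := ip_had _ _ _
      have h2 : Matrix.hadamard U1 W1 = -(U2 * C0ᵀ) := by
        rw [← heq1 p]
        have : A1 - X1' = -(X1' - A1) := by abel
        rw [hU1, this, hadamard_neg_left, hadamard_neg_left]
      have h3 : ip U2 V2 = ip (U2 * C0ᵀ) (X1' - X0) := ip_mul_right _ _ _
      rw [h1, h2, ip_neg_left, h3]; ring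
    have stepX : mseq p = ip U1 U1 + ip U2 U2 + (ip V1 V1 + ip V2 V2) := by
      rw [hm p, frob_sq, frob_sq, ← hX0, ← hC0, ← hB0, ← hD0, e1, e2, ip_expand, ip_expand]
      have : ip U1 V1 = -ip U2 V2 := by linarith
      rw [this]; ring
    -- C-step
    have e3 : U2 = (A2 - X1' * C1 - B0 * D0) + X1' * (C1 - C0) := by
      rw [hU2, Matrix.mul_sub]; abel
    set U3 := A2 - X1' * C1 - B0 * D0 with hU3
    have orth3 : ip U3 (X1' * (C1 - C0)) = 0 := by
      rw [ip_mul_left, heq2 p]; simp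
    have stepC : ip U2 U2 = ip U3 U3 + ip (X1' * (C1 - C0)) (X1' * (C1 - C0)) := by
      rw [e3]; exact pyth _ _ orth3
    -- B-step
    have e4 : U3 = (A2 - X1' * C1 - B1 * D0) + (B1 - B0) * D0 := by
      rw [hU3, Matrix.sub_mul]; abel
    set U4 := A2 - X1' * C1 - B1 * D0 with hU4
    have orth4 : ip U4 ((B1 - B0) * D0) = 0 := by
      rw [ip_mul_right, heq3 p, ip_zero_left]
    have stepB : ip U3 U3 = ip U4 U4 + ip ((B1 - B0) * D0) ((B1 - B0) * D0) := by
      rw [e4]; exact pyth _ _ orth4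
    -- D-step
    have e5 : U4 = (A2 - X1' * C1 - B1 * D1) + B1 * (D1 - D0) := by
      rw [hU4, Matrix.mul_sub]; abel
    set U5 := A2 - X1' * C1 - B1 * D1 with hU5
    have orth5 : ip U5 (B1 * (D1 - D0)) = 0 := by
      rw [ip_mul_left, heq4 p]; simp
    have stepD : ip U4 U4 = ip U5 U5 + ip (B1 * (D1 - D0)) (B1 * (D1 - D0)) := by
      rw [e5]; exact pyth _ _ orth5
    -- next value
    have hnext : mseq (p + 1) = ip U1 U1 + ip U5 U5 := by
      rw [hm (p + 1), frob_sq, frob_sq]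
    have hdiff : mseq p - mseq (p + 1)
        = ip V1 V1 + ip V2 V2 + ip (X1' * (C1 - C0)) (X1' * (C1 - C0))
          + ip ((B1 - B0) * D0) ((B1 - B0) * D0) + ip (B1 * (D1 - D0)) (B1 * (D1 - D0)) := by
      rw [stepX, hnext, stepC, stepB, stepD]; ring
    constructor
    · rw [hdiff]
      have := ip_nonneg V1; have := ip_nonneg V2
      have := ip_nonneg (X1' * (C1 - C0)); have := ip_nonneg (B1 * (D1 - D0))
      linarith
    · rw [hdiff]
      have := ip_nonneg V1; have := ip_nonneg V2
      have := ip_nonneg (X1' * (C1 - C0)); have := ip_nonneg (B1 * (D1 - D0))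
      have := ip_nonneg ((B1 - B0) * D0)
      linarith
  -- Step 2: entrywise bound for p ≥ N.
  have entry : ∀ p, N ≤ p → ∀ i j, |B (p + 1) i j - B p i j|
      ≤ Real.sqrt (mseq p - mseq (p + 1)) / Real.sqrt δ := by
    intro p hp i j
    set E := B (p + 1) - B p with hE
    have hpsd := hD p hp
    have htr : 0 ≤ (E * (D p * (D p)ᵀ - δ • (1 : Matrix (Fin s) (Fin s) ℝ)) * Eᵀ).trace :=
      trace_mul_psd_nonneg hpsd E
    have hsplit : E * (D p * (D p)ᵀ - δ • (1 : Matrix (Fin s) (Fin s) ℝ)) * Eᵀ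
        = E * (D p * (D p)ᵀ) * Eᵀ - δ • (E * Eᵀ) := by
      rw [Matrix.mul_sub, Matrix.sub_mul]
      congr 1
      rw [Matrix.mul_smul, Matrix.mul_one, Matrix.smul_mul]
    rw [hsplit, Matrix.trace_sub, Matrix.trace_smul, smul_eq_mul, sub_nonneg] at htr
    have hED : ip (E * D p) (E * D p) = (E * (D p * (D p)ᵀ) * Eᵀ).trace := by
      rw [ip_eq_trace, Matrix.transpose_mul]
      simp only [Matrix.mul_assoc]
    have hEE : (E * Eᵀ).trace = ip E E := (ip_eq_trace E E).symm
    have hle1 : δ * ip E E ≤ ip (E * D p) (E * D p) := by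
      rw [hED, ← hEE]; exact htr
    have hle2 := (key p).1
    have hle3 : δ * ip E E ≤ mseq p - mseq (p + 1) := le_trans hle1 hle2
    have hipE : ip E E ≤ (mseq p - mseq (p + 1)) / δ := by
      rw [le_div_iff₀ hδ]; linarith [hle3]
    have hsq : (E i j) ^ 2 ≤ (mseq p - mseq (p + 1)) / δ :=
      le_trans (single_sq_le_ip E i j) hipE
    have habs : |E i j| ≤ Real.sqrt ((mseq p - mseq (p + 1)) / δ) := Real.abs_le_sqrt hsq
    rw [Real.sqrt_div (key p).2 δ] at habs
    have : E i j = B (p + 1) i j - B p i j := by simp [hE]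
    rwa [this] at habs
  -- Step 3: each entry sequence converges.
  have hconv : ∀ i j, ∃ L : ℝ, Tendsto (fun p => B p i j) atTop (nhds L) := by
    intro i j
    set d : ℕ → ℝ := fun n => Real.sqrt (mseq (n + N) - mseq (n + N + 1)) / Real.sqrt δ with hd
    have hdsum : Summable d := by
      exact ((summable_nat_add_iff N).2 hsum).div_const _
    have hcauchy : CauchySeq (fun n => B (n + N) i j) := by
      refine cauchySeq_of_dist_le_of_summable d (fun n => ?_) hdsum
      rw [Real.dist_eq, abs_sub_comm, Nat.succ_add]
      exact entry (n + N) (Nat.le_add_left N n) i j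
    obtain ⟨L, hL⟩ := cauchySeq_tendsto_of_complete hcauchy
    exact ⟨L, (tendsto_add_atTop_iff_nat N).1 hL⟩
  choose L hL using hconv
  refine ⟨Matrix.of L, ?_⟩
  refine tendsto_pi_nhds.2 ?_
  intro i
  rw [tendsto_pi_nhds]
  intro j
  exact hL i j
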